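/- The skew-symmetric bilinear form Omega^D on R^{2n} defined by Omega^D(x,y) = sum_{i=1}^n (x_i y_{ĩ} - x_{ĩ} y_i) + sum_{j=1}^{n} (x_{j̃} y_{j+1} - x_{j+1} y_{j̃}) (indices cyclic modulo n) has kernel spanned by (1,0,1,0,...,1,0) and (0,1,0,1,...,0,1). -/
import Mathlib


/-- The unmarked coordinate `x_{i+1}` (0-based `i`) of a vector in ℝ^{2n}:
coordinates are listed in the order 1, 1̃, 2, 2̃, …, n, ñ. -/
def unmCoord {n : ℕ} (x : Fin (2 * n) → ℝ) (i : ℕ) : ℝ :=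
  if h : 2 * i < 2 * n then x ⟨2 * i, h⟩ else 0

/-- The tilde coordinate `x_{(i+1)~}` (0-based `i`) of a vector in ℝ^{2n}. -/
def tldCoord {n : ℕ} (x : Fin (2 * n) → ℝ) (i : ℕ) : ℝ :=
  if h : 2 * i + 1 < 2 * n then x ⟨2 * i + 1, h⟩ else 0

/-- The skew-symmetric bilinear form Ω on ℝ^{2n}. -/
def Omega (n : ℕ) (x y : Fin (2 * n) → ℝ) : ℝ :=
  (∑ i ∈ Finset.range n,
      (unmCoord x i * tldCoord y i - tldCoord x i * unmCoord y i)) +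
  (∑ j ∈ Finset.range (n - 1),
      (unmCoord x (j + 1) * tldCoord y j - tldCoord x j * unmCoord y (j + 1))) +
  (-1 : ℝ) ^ n *
      (unmCoord x 0 * tldCoord y (n - 1) - tldCoord x (n - 1) * unmCoord y 0)

/-- The skew-symmetric bilinear form Ω^D on ℝ^{2n}, with cyclic indices mod n. -/
def OmegaD (n : ℕ) (x y : Fin (2 * n) → ℝ) : ℝ :=
  (∑ i ∈ Finset.range n,
      (unmCoord x i * tldCoord y i - tldCoord x i * unmCoord y i)) +
  (∑ j ∈ Finset.range n,
      (tldCoord x j * unmCoord y ((j + 1) % n) -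
        unmCoord x ((j + 1) % n) * tldCoord y j))

-- linearity
lemma unm_comb {n : ℕ} (c d : ℝ) (x y : Fin (2*n) → ℝ) (i : ℕ) :
    unmCoord (c • x + d • y) i = c * unmCoord x i + d * unmCoord y i := by
  unfold unmCoord; split <;> simp

lemma tld_comb {n : ℕ} (c d : ℝ) (x y : Fin (2*n) → ℝ) (i : ℕ) :
    tldCoord (c • x + d • y) i = c * tldCoord x i + d * tldCoord y i := by
  unfold tldCoord; split <;> simp

lemma OmegaD_comb (n : ℕ) (c d : ℝ) (x y w : Fin (2*n) → ℝ) :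
    OmegaD n (c • x + d • y) w = c * OmegaD n x w + d * OmegaD n y w := by
  unfold OmegaD
  have h1 : ∑ i ∈ Finset.range n,
      (unmCoord (c • x + d • y) i * tldCoord w i - tldCoord (c • x + d • y) i * unmCoord w i)
      = c * (∑ i ∈ Finset.range n, (unmCoord x i * tldCoord w i - tldCoord x i * unmCoord w i))
        + d * (∑ i ∈ Finset.range n, (unmCoord y i * tldCoord w i - tldCoord y i * unmCoord w i)) := by
    rw [Finset.mul_sum, Finset.mul_sum, ← Finset.sum_add_distrib]
    exact Finset.sum_congr rfl fun i _ => by rw [unm_comb, tld_comb]; ring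
  have h2 : ∑ j ∈ Finset.range n,
      (tldCoord (c • x + d • y) j * unmCoord w ((j + 1) % n) -
        unmCoord (c • x + d • y) ((j + 1) % n) * tldCoord w j)
      = c * (∑ j ∈ Finset.range n, (tldCoord x j * unmCoord w ((j + 1) % n) -
          unmCoord x ((j + 1) % n) * tldCoord w j))
        + d * (∑ j ∈ Finset.range n, (tldCoord y j * unmCoord w ((j + 1) % n) -
          unmCoord y ((j + 1) % n) * tldCoord w j)) := by
    rw [Finset.mul_sum, Finset.mul_sum, ← Finset.sum_add_distrib]
    exact Finset.sum_congr rfl fun j _ => by rw [unm_comb, tld_comb]; ring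
  rw [h1, h2]; ring

lemma sum_cycle (n : ℕ) (hn : 1 ≤ n) (f : ℕ → ℝ) :
    ∑ j ∈ Finset.range n, f ((j + 1) % n) = ∑ i ∈ Finset.range n, f i := by
  apply Finset.sum_nbij' (i := fun j => (j + 1) % n) (j := fun i => (i + (n - 1)) % n)
  · intro a ha; exact Finset.mem_range.mpr (Nat.mod_lt _ (by omega))
  · intro a ha; exact Finset.mem_range.mpr (Nat.mod_lt _ (by omega))
  · intro a ha
    simp only [Finset.mem_range] at ha
    rw [Nat.mod_add_mod]
    have : a + 1 + (n - 1) = a + n := by omega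
    rw [this, Nat.add_mod_right, Nat.mod_eq_of_lt ha]
  · intro a ha
    simp only [Finset.mem_range] at ha
    rw [Nat.mod_add_mod]
    have : a + (n - 1) + 1 = a + n := by omega
    rw [this, Nat.add_mod_right, Nat.mod_eq_of_lt ha]
  · intro a ha; rfl

lemma v1_ker (n : ℕ) (hn : 2 ≤ n) (w : Fin (2*n) → ℝ) :
    OmegaD n (fun k : Fin (2 * n) => if (k : ℕ) % 2 = 0 then (1 : ℝ) else 0) w = 0 := by
  unfold OmegaD
  have hu : ∀ i < n, unmCoord (n := n) (fun k : Fin (2 * n) => if (k : ℕ) % 2 = 0 then (1 : ℝ) else 0) i = 1 := by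
    intro i hi; unfold unmCoord; rw [dif_pos (by omega)]; simp [Nat.mul_mod_right]
  have ht : ∀ i, tldCoord (n := n) (fun k : Fin (2 * n) => if (k : ℕ) % 2 = 0 then (1 : ℝ) else 0) i = 0 := by
    intro i; unfold tldCoord; split
    · simp [Nat.add_mul_mod_self_left, Nat.mul_add_mod]
    · rfl
  have e1 : ∀ i ∈ Finset.range n,
      (unmCoord (n := n) (fun k : Fin (2 * n) => if (k : ℕ) % 2 = 0 then (1 : ℝ) else 0) i * tldCoord w i -
        tldCoord (fun k : Fin (2 * n) => if (k : ℕ) % 2 = 0 then (1 : ℝ) else 0) i * unmCoord w i)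
      = tldCoord w i := fun i hi => by
    rw [hu i (Finset.mem_range.mp hi), ht, one_mul, zero_mul, sub_zero]
  have e2 : ∀ j ∈ Finset.range n,
      (tldCoord (n := n) (fun k : Fin (2 * n) => if (k : ℕ) % 2 = 0 then (1 : ℝ) else 0) j * unmCoord w ((j + 1) % n) -
        unmCoord (fun k : Fin (2 * n) => if (k : ℕ) % 2 = 0 then (1 : ℝ) else 0) ((j + 1) % n) * tldCoord w j)
      = -tldCoord w j := fun j hj => by
    rw [ht, hu ((j+1)%n) (Nat.mod_lt _ (by omega)), zero_mul, one_mul, zero_sub]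
  rw [Finset.sum_congr rfl e1, Finset.sum_congr rfl e2, Finset.sum_neg_distrib]
  ring

lemma v2_ker (n : ℕ) (hn : 2 ≤ n) (w : Fin (2*n) → ℝ) :
    OmegaD n (fun k : Fin (2 * n) => if (k : ℕ) % 2 = 1 then (1 : ℝ) else 0) w = 0 := by
  unfold OmegaD
  have hu : ∀ i, unmCoord (n := n) (fun k : Fin (2 * n) => if (k : ℕ) % 2 = 1 then (1 : ℝ) else 0) i = 0 := by
    intro i; unfold unmCoord; split
    · simp [Nat.mul_mod_right]
    · rfl
  have ht : ∀ i < n, tldCoord (n := n) (fun k : Fin (2 * n) => if (k : ℕ) % 2 = 1 then (1 : ℝ) else 0) i = 1 := by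
    intro i hi; unfold tldCoord; rw [dif_pos (by omega)]
    simp [Nat.mul_add_mod]
  have e1 : ∀ i ∈ Finset.range n,
      (unmCoord (n := n) (fun k : Fin (2 * n) => if (k : ℕ) % 2 = 1 then (1 : ℝ) else 0) i * tldCoord w i -
        tldCoord (fun k : Fin (2 * n) => if (k : ℕ) % 2 = 1 then (1 : ℝ) else 0) i * unmCoord w i)
      = -unmCoord w i := fun i hi => by
    rw [hu, ht i (Finset.mem_range.mp hi), zero_mul, one_mul, zero_sub]
  have e2 : ∀ j ∈ Finset.range n,
      (tldCoord (n := n) (fun k : Fin (2 * n) => if (k : ℕ) % 2 = 1 then (1 : ℝ) else 0) j * unmCoord w ((j + 1) % n) -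
        unmCoord (fun k : Fin (2 * n) => if (k : ℕ) % 2 = 1 then (1 : ℝ) else 0) ((j + 1) % n) * tldCoord w j)
      = unmCoord w ((j + 1) % n) := fun j hj => by
    rw [ht j (Finset.mem_range.mp hj), hu, one_mul, zero_mul, sub_zero]
  rw [Finset.sum_congr rfl e1, Finset.sum_congr rfl e2, Finset.sum_neg_distrib,
    sum_cycle n (by omega)]
  ring

lemma key_b (n : ℕ) (hn : 2 ≤ n) (v : Fin (2*n) → ℝ)
    (h : ∀ w, OmegaD n v w = 0) (k : ℕ) (hk1 : 1 ≤ k) (hk : k < n) :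
    tldCoord v (k - 1) = tldCoord v k := by
  set e : Fin (2*n) → ℝ := fun j : Fin (2*n) => if (j : ℕ) = 2 * k then 1 else 0 with he
  have hw := h e
  unfold OmegaD at hw
  have hu : ∀ i, unmCoord (n := n) e i = if i = k then 1 else 0 := by
    intro i; unfold unmCoord; rw [he]; split
    · simp only []
      by_cases hik : i = k
      · simp [hik]
      · rw [if_neg (by omega), if_neg hik]
    · rw [if_neg (by omega)]
  have ht : ∀ i, tldCoord (n := n) e i = 0 := by
    intro i; unfold tldCoord; rw [he]; split
    · simp only []; rw [if_neg (by omega)]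
    · rfl
  have c1 : ∀ i ∈ Finset.range n,
      unmCoord v i * tldCoord e i - tldCoord v i * unmCoord e i
      = -(if i = k then tldCoord v i else 0) := by
    intro i _; rw [hu, ht, mul_zero, zero_sub, mul_ite, mul_one, mul_zero]
  have c2 : ∀ j ∈ Finset.range n,
      tldCoord v j * unmCoord e ((j + 1) % n) - unmCoord v ((j + 1) % n) * tldCoord e j
      = (if (j + 1) % n = k then tldCoord v j else 0) := by
    intro j _; rw [hu, ht, mul_zero, sub_zero, mul_ite, mul_one, mul_zero]
  rw [Finset.sum_congr rfl c1, Finset.sum_congr rfl c2, Finset.sum_neg_distrib,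
    Finset.sum_ite_eq' (Finset.range n) k (fun i => tldCoord v i),
    if_pos (Finset.mem_range.mpr hk)] at hw
  rw [Finset.sum_eq_single (k - 1)] at hw
  · rw [if_pos (by rw [Nat.sub_add_cancel hk1, Nat.mod_eq_of_lt hk])] at hw
    linarith
  · intro j hj hjk
    rw [if_neg]
    simp only [Finset.mem_range] at hj
    intro hcon
    rcases Nat.lt_or_ge (j + 1) n with h' | h'
    · rw [Nat.mod_eq_of_lt h'] at hcon; omega
    · have hjn : j + 1 = n := by omega
      rw [hjn, Nat.mod_self] at hcon; omega
  · intro hcon; exact absurd (Finset.mem_range.mpr (by omega)) hcon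

lemma key_a (n : ℕ) (hn : 2 ≤ n) (v : Fin (2*n) → ℝ)
    (h : ∀ w, OmegaD n v w = 0) (k : ℕ) (hk : k + 1 < n) :
    unmCoord v (k + 1) = unmCoord v k := by
  set e : Fin (2*n) → ℝ := fun j : Fin (2*n) => if (j : ℕ) = 2 * k + 1 then 1 else 0 with he
  have hw := h e
  unfold OmegaD at hw
  have hu : ∀ i, unmCoord (n := n) e i = 0 := by
    intro i; unfold unmCoord; rw [he]; split
    · simp only []; rw [if_neg (by omega)]
    · rfl
  have ht : ∀ i, tldCoord (n := n) e i = if i = k then 1 else 0 := by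
    intro i; unfold tldCoord; rw [he]; split
    · simp only []
      by_cases hik : i = k
      · simp [hik]
      · rw [if_neg (by omega), if_neg hik]
    · rw [if_neg (by omega)]
  have c1 : ∀ i ∈ Finset.range n,
      unmCoord v i * tldCoord e i - tldCoord v i * unmCoord e i
      = (if i = k then unmCoord v i else 0) := by
    intro i _; rw [hu, ht, mul_zero, sub_zero, mul_ite, mul_one, mul_zero]
  have c2 : ∀ j ∈ Finset.range n,
      tldCoord v j * unmCoord e ((j + 1) % n) - unmCoord v ((j + 1) % n) * tldCoord e j
      = -(if j = k then unmCoord v ((j + 1) % n) else 0) := by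
    intro j _; rw [hu, ht, mul_zero, zero_sub, mul_ite, mul_one, mul_zero]
  rw [Finset.sum_congr rfl c1, Finset.sum_congr rfl c2, Finset.sum_neg_distrib,
    Finset.sum_ite_eq' (Finset.range n) k (fun i => unmCoord v i),
    Finset.sum_ite_eq' (Finset.range n) k (fun j => unmCoord v ((j + 1) % n)),
    if_pos (Finset.mem_range.mpr (by omega : k < n)),
    if_pos (Finset.mem_range.mpr (by omega : k < n)),
    Nat.mod_eq_of_lt hk] at hw
  linarith

/-- The kernel of Ω^D is spanned by (1,0,1,0,…,1,0) and (0,1,0,1,…,0,1). -/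
theorem omegaD_kernel (n : ℕ) (hn : 2 ≤ n)
    (v₁ v₂ : Fin (2 * n) → ℝ)
    (hv₁ : v₁ = fun k : Fin (2 * n) => if (k : ℕ) % 2 = 0 then (1 : ℝ) else 0)
    (hv₂ : v₂ = fun k : Fin (2 * n) => if (k : ℕ) % 2 = 1 then (1 : ℝ) else 0) :
    {v : Fin (2 * n) → ℝ | ∀ w, OmegaD n v w = 0} =
      (Submodule.span ℝ {v₁, v₂} : Set (Fin (2 * n) → ℝ)) := by
  ext v
  simp only [Set.mem_setOf_eq, SetLike.mem_coe, Submodule.mem_span_pair]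
  constructor
  · intro h
    refine ⟨unmCoord v 0, tldCoord v 0, ?_⟩
    have ha : ∀ i, i < n → unmCoord v i = unmCoord v 0 := by
      intro i
      induction i with
      | zero => intro _; rfl
      | succ m ih =>
        intro hi
        rw [key_a n hn v h m hi]
        exact ih (by omega)
    have hb : ∀ i, i < n → tldCoord v i = tldCoord v 0 := by
      intro i
      induction i with
      | zero => intro _; rfl
      | succ m ih =>
        intro hi
        have hkb := key_b n hn v h (m + 1) (by omega) hi
        simp only [Nat.add_sub_cancel] at hkb
        rw [← hkb]
        exact ih (by omega)
    funext k
    simp only [hv₁, hv₂, Pi.add_apply, Pi.smul_apply, smul_eq_mul]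
    by_cases hk2 : (k : ℕ) % 2 = 0
    · rw [if_pos hk2, if_neg (by omega), mul_one, mul_zero, add_zero]
      have hvk : v k = unmCoord v ((k : ℕ) / 2) := by
        unfold unmCoord
        rw [dif_pos (by omega)]
        congr 1
        exact Fin.ext (by simp; omega)
      rw [hvk]; exact (ha _ (by omega)).symm
    · rw [if_neg hk2, if_pos (by omega), mul_zero, mul_one, zero_add]
      have hvk : v k = tldCoord v ((k : ℕ) / 2) := by
        unfold tldCoord
        rw [dif_pos (by omega)]
        congr 1
        exact Fin.ext (by simp; omega)
      rw [hvk]; exact (hb _ (by omega)).symm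
  · rintro ⟨c, d, rfl⟩ w
    rw [hv₁, hv₂, OmegaD_comb, v1_ker n hn, v2_ker n hn]
    ring
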